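/- Let f ∈ ℍ[X] be nonzero of degree n. If λ₁, …, λ_k ∈ ℍ \ ℝ are spherical roots of f that are pairwise not quadratically equivalent, then 2k ≤ n. In other words, f has at most ⌊n/2⌋ quadratic-equivalence classes of spherical roots. -/

import Mathlib

open Polynomial

/-- A spherical root of `f ∈ ℍ[X]`: a non-real `λ` such that every root of the
characteristic polynomial `p_λ(x) = x² − tr(λ)x + n(λ)` of `λ` is a root of `f`. -/
def SphericalRoot (f : Polynomial (Quaternion ℝ)) (lam : Quaternion ℝ) : Prop :=
  lam ∉ Set.range (algebraMap ℝ (Quaternion ℝ)) ∧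
    ∀ r : Quaternion ℝ,
      r ^ 2 - (2 * lam.re) • r + ((Quaternion.normSq lam : ℝ) : Quaternion ℝ) = 0 →
        Polynomial.eval r f = 0

/-- Quadratic equivalence on ℍ: equal traces and norms. -/
def QuadEquiv (r lam : Quaternion ℝ) : Prop :=
  2 * r.re = 2 * lam.re ∧ Quaternion.normSq r = Quaternion.normSq lam

noncomputable abbrev qpoly (a : Quaternion ℝ) : Polynomial ℝ :=
  X ^ 2 - C (2 * a.re) * X + C (Quaternion.normSq a)

lemma quad_self (a : Quaternion ℝ) :
    a ^ 2 - (2 * a.re) • a + ((Quaternion.normSq a : ℝ) : Quaternion ℝ) = 0 := by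
  rw [← Quaternion.coe_mul_eq_smul, ← Quaternion.self_add_star', ← Quaternion.star_mul_self, sq]
  noncomm_ring

lemma quad_star (a : Quaternion ℝ) :
    (star a) ^ 2 - (2 * a.re) • (star a) + ((Quaternion.normSq a : ℝ) : Quaternion ℝ) = 0 := by
  have := quad_self (star a)
  rwa [Quaternion.re_star, Quaternion.normSq_star] at this

lemma monic_qpoly (a : Quaternion ℝ) : (qpoly a).Monic := by
  have h : qpoly a = X ^ 2 + (C (-(2 * a.re)) * X + C (Quaternion.normSq a)) := by
    simp [qpoly]; ring
  rw [h]
  refine monic_X_pow_add ?_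
  refine lt_of_le_of_lt (degree_add_le _ _) ?_
  refine max_lt ?_ ?_
  · exact lt_of_le_of_lt (degree_C_mul_X_le _) (by norm_num)
  · exact lt_of_le_of_lt degree_C_le (by norm_num)

lemma natDegree_qpoly (a : Quaternion ℝ) : (qpoly a).natDegree = 2 := by
  unfold qpoly
  compute_degree!

lemma commute_C_coe (c : ℝ) (p : Polynomial (Quaternion ℝ)) :
    Commute (C ((c : ℝ) : Quaternion ℝ)) p := by
  refine Polynomial.ext fun n => ?_
  simp only [coeff_C_mul, coeff_mul_C]
  exact Quaternion.coe_commutes _ _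

lemma commute_map (Q : Polynomial ℝ) (p : Polynomial (Quaternion ℝ)) :
    Commute (Q.map (algebraMap ℝ (Quaternion ℝ))) p := by
  induction Q using Polynomial.induction_on' with
  | add f g hf hg => rw [Polynomial.map_add]; exact hf.add_left hg
  | monomial m c =>
      rw [Polynomial.map_monomial, ← C_mul_X_pow_eq_monomial]
      exact ((commute_C_coe c p).mul_left ((Polynomial.commute_X p).pow_left m))

lemma eval_mul_map (Q : Polynomial ℝ) (p : Polynomial (Quaternion ℝ)) (r : Quaternion ℝ) :
    eval r (p * Q.map (algebraMap ℝ (Quaternion ℝ))) =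
      eval r p * eval r (Q.map (algebraMap ℝ (Quaternion ℝ))) := by
  refine eval₂_mul_noncomm _ _ fun k => ?_
  simp only [coeff_map, RingHom.id_apply]
  exact (Quaternion.coe_commute _ _)

lemma eval_qpoly (a : Quaternion ℝ) (r : Quaternion ℝ) :
    eval r ((qpoly a).map (algebraMap ℝ (Quaternion ℝ))) =
      r ^ 2 - (2 * a.re) • r + ((Quaternion.normSq a : ℝ) : Quaternion ℝ) := by
  rw [eval_map, ← aeval_def]
  simp only [qpoly, map_sub, map_add, map_mul, map_pow, aeval_X, aeval_C]
  rw [Algebra.smul_def, ← map_mul]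
  rfl

lemma re_sq_lt_normSq {a : Quaternion ℝ} (h : a ∉ Set.range (algebraMap ℝ (Quaternion ℝ))) :
    a.re ^ 2 < Quaternion.normSq a := by
  rw [Quaternion.normSq_def']
  by_contra hle
  push_neg at hle
  have hI : a.imI = 0 := by
    have h2 : a.imI ^ 2 = 0 :=
      le_antisymm (by nlinarith [sq_nonneg a.imJ, sq_nonneg a.imK]) (sq_nonneg _)
    exact pow_eq_zero_iff (two_ne_zero) |>.mp h2
  have hJ : a.imJ = 0 := by
    have h2 : a.imJ ^ 2 = 0 :=
      le_antisymm (by nlinarith [sq_nonneg a.imI, sq_nonneg a.imK]) (sq_nonneg _)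
    exact pow_eq_zero_iff (two_ne_zero) |>.mp h2
  have hK : a.imK = 0 := by
    have h2 : a.imK ^ 2 = 0 :=
      le_antisymm (by nlinarith [sq_nonneg a.imI, sq_nonneg a.imJ]) (sq_nonneg _)
    exact pow_eq_zero_iff (two_ne_zero) |>.mp h2
  exact h ⟨a.re, by ext <;> simp [hI, hJ, hK, QuaternionAlgebra.algebraMap_eq]⟩

lemma quad_root_nonreal {a r : Quaternion ℝ}
    (ha : a ∉ Set.range (algebraMap ℝ (Quaternion ℝ)))
    (hr : r ^ 2 - (2 * a.re) • r + ((Quaternion.normSq a : ℝ) : Quaternion ℝ) = 0) :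
    r ∉ Set.range (algebraMap ℝ (Quaternion ℝ)) := by
  rintro ⟨s, rfl⟩
  have key : a.re ^ 2 < Quaternion.normSq a := re_sq_lt_normSq ha
  have hs : algebraMap ℝ (Quaternion ℝ) s = ((s : ℝ) : Quaternion ℝ) := rfl
  rw [hs, ← Quaternion.coe_pow, Quaternion.smul_coe, ← Quaternion.coe_sub,
    ← Quaternion.coe_add] at hr
  have h1 : s ^ 2 - 2 * a.re * s + Quaternion.normSq a = 0 :=
    Quaternion.coe_injective (by rw [hr]; exact Quaternion.coe_zero.symm)
  nlinarith [sq_nonneg (s - a.re)]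

/-- A spherical root's characteristic polynomial divides `f`. -/
lemma spherical_modByMonic_eq_zero {f : Polynomial (Quaternion ℝ)} {μ : Quaternion ℝ}
    (h : SphericalRoot f μ) :
    f %ₘ ((qpoly μ).map (algebraMap ℝ (Quaternion ℝ))) = 0 := by
  set q : Polynomial (Quaternion ℝ) := (qpoly μ).map (algebraMap ℝ (Quaternion ℝ)) with hqdef
  have hq : q.Monic := (monic_qpoly μ).map _
  have hdiv := modByMonic_add_div f q
  set g : Polynomial (Quaternion ℝ) := f /ₘ q with hgdef
  set rem : Polynomial (Quaternion ℝ) := f %ₘ q with hremdef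
  have key : ∀ r : Quaternion ℝ,
      r ^ 2 - (2 * μ.re) • r + ((Quaternion.normSq μ : ℝ) : Quaternion ℝ) = 0 →
      eval r rem = 0 := by
    intro r hr
    have h1 : eval r f = eval r rem + eval r g * eval r q := by
      conv_lhs => rw [← hdiv]
      rw [(commute_map (qpoly μ) g).eq, eval_add, eval_mul_map]
    rw [h.2 r hr, eval_qpoly, hr, mul_zero, add_zero] at h1
    exact h1.symm
  have hdeg : rem.degree < 2 := by
    have h2 : q.degree = 2 := by
      rw [(monic_qpoly μ).degree_map, degree_eq_natDegree (monic_qpoly μ).ne_zero,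
        natDegree_qpoly]
      rfl
    exact h2 ▸ degree_modByMonic_lt f hq
  by_contra h0
  have hdeg1 : rem.degree ≤ 1 := by
    have h1 : rem.natDegree < 2 := (natDegree_lt_iff_degree_lt h0).mpr (by exact_mod_cast hdeg)
    exact degree_le_of_natDegree_le (Nat.lt_succ_iff.mp h1)
  have hrem : rem = C (rem.coeff 1) * X + C (rem.coeff 0) := eq_X_add_C_of_degree_le_one hdeg1
  set a : Quaternion ℝ := rem.coeff 1
  set b : Quaternion ℝ := rem.coeff 0
  have e1 : a * μ + b = 0 := by
    have := key μ (quad_self μ)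
    rwa [hrem, eval_add, eval_C_mul, eval_X, eval_C] at this
  have e2 : a * star μ + b = 0 := by
    have := key (star μ) (quad_star μ)
    rwa [hrem, eval_add, eval_C_mul, eval_X, eval_C] at this
  have hμ : μ - star μ ≠ 0 := by
    rw [sub_ne_zero]
    intro hee
    exact h.1 ⟨μ.re, (Quaternion.star_eq_self.mp hee.symm).symm⟩
  have ha : a = 0 := by
    have : a * (μ - star μ) = 0 := by
      rw [mul_sub]
      have := sub_eq_zero.mpr (e1.trans e2.symm)
      rwa [add_sub_add_right_eq_sub] at this
    rcases mul_eq_zero.mp this with h' | h'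
    · exact h'
    · exact absurd h' hμ
  have hb : b = 0 := by rwa [ha, zero_mul, zero_add] at e1
  exact h0 (by rw [hrem, ha, hb]; simp)

theorem card_spherical_root_classes_le
    (f : Polynomial (Quaternion ℝ)) (hf : f ≠ 0) (k : ℕ)
    (lam : Fin k → Quaternion ℝ)
    (hsph : ∀ i, SphericalRoot f (lam i))
    (hne : ∀ i j, i ≠ j → ¬ QuadEquiv (lam i) (lam j)) :
    2 * k ≤ f.natDegree := by
  induction k generalizing f with
  | zero => exact Nat.zero_le _
  | succ k ih =>
    set μ : Quaternion ℝ := lam (Fin.last k) with hμdef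
    set q : Polynomial (Quaternion ℝ) := (qpoly μ).map (algebraMap ℝ (Quaternion ℝ)) with hqdef
    have hq : q.Monic := (monic_qpoly μ).map _
    have hmod : f %ₘ q = 0 := spherical_modByMonic_eq_zero (hsph (Fin.last k))
    set g : Polynomial (Quaternion ℝ) := f /ₘ q with hgdef
    have hfq : f = q * g := by
      have := modByMonic_add_div f q
      rw [hmod, zero_add] at this
      exact this.symm
    have hg : g ≠ 0 := by
      intro h0
      rw [h0, mul_zero] at hfq
      exact hf hfq
    have hsph' : ∀ i : Fin k, SphericalRoot g (lam i.castSucc) := by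
      intro i
      refine ⟨(hsph i.castSucc).1, fun r hr => ?_⟩
      have hfr : eval r f = 0 := (hsph i.castSucc).2 r hr
      have hmul : eval r f = eval r g * eval r q := by
        rw [hfq, (commute_map (qpoly μ) g).eq, eval_mul_map]
      have hq_ne : eval r q ≠ 0 := by
        set c : ℝ := (lam i.castSucc).re
        set nc : ℝ := Quaternion.normSq (lam i.castSucc)
        have h2 : r ^ 2 = (2 * c) • r - ((nc : ℝ) : Quaternion ℝ) := by
          have h3 := hr
          rw [sub_add] at h3
          exact sub_eq_zero.mp h3
        have hev : eval r q =
            (2 * c - 2 * μ.re) • r + ((Quaternion.normSq μ - nc : ℝ) : Quaternion ℝ) := by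
          rw [eval_qpoly, h2, Quaternion.coe_sub, sub_smul]
          abel
        have hnequiv := hne i.castSucc (Fin.last k) (Fin.castSucc_lt_last i).ne
        rw [QuadEquiv] at hnequiv
        by_cases hc : 2 * c = 2 * μ.re
        · have hn : nc ≠ Quaternion.normSq μ := fun hnn => hnequiv ⟨hc, hnn⟩
          rw [hev, hc, sub_self, zero_smul, zero_add]
          intro h4
          exact hn (by
            have := Quaternion.coe_injective (h4.trans Quaternion.coe_zero.symm)
            linarith [this])
        · intro h4
          rw [hev] at h4
          have hd : (2 * c - 2 * μ.re) ≠ 0 := sub_ne_zero.mpr hc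
          have h5 : (2 * c - 2 * μ.re) • r = -((Quaternion.normSq μ - nc : ℝ) : Quaternion ℝ) :=
            eq_neg_of_add_eq_zero_left h4
          have hrr : r = (((2 * c - 2 * μ.re)⁻¹ * -(Quaternion.normSq μ - nc) : ℝ) :
              Quaternion ℝ) := by
            calc r = (2 * c - 2 * μ.re)⁻¹ • ((2 * c - 2 * μ.re) • r) := by
                    rw [smul_smul, inv_mul_cancel₀ hd, one_smul]
              _ = (2 * c - 2 * μ.re)⁻¹ • (-((Quaternion.normSq μ - nc : ℝ) : Quaternion ℝ)) := by
                    rw [h5]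
              _ = _ := by rw [← Quaternion.coe_neg, Quaternion.smul_coe]
          exact quad_root_nonreal (hsph i.castSucc).1 hr ⟨_, hrr.symm⟩
      rcases mul_eq_zero.mp (hmul ▸ hfr) with h' | h'
      · exact h'
      · exact absurd h' hq_ne
    have hne' : ∀ i j : Fin k, i ≠ j →
        ¬ QuadEquiv (lam i.castSucc) (lam j.castSucc) := fun i j hij =>
      hne _ _ (fun h' => hij (Fin.castSucc_injective _ h'))
    have hdeg : f.natDegree = 2 + g.natDegree := by
      rw [hfq, hq.natDegree_mul' hg, (monic_qpoly μ).natDegree_map, natDegree_qpoly]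
    have := ih g hg (fun i => lam i.castSucc) hsph' hne'
    omega
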